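/- Let A = {a_1,...,a_μ} with a_i ∈ [δn, n] for δ ∈ (0,1]. Then (Σ_{a∈A} a^{−1}) / (Σ_{a∈A} a^{−1/2})² ≤ μ^{−1} · (1 + √δ)² / (4√δ). -/

import Mathlib

open Finset

/-- For a set `A` of `μn` reals all lying in `[δn, n]`,
`(∑_{a∈A} a⁻¹) / (∑_{a∈A} a^{-1/2})² ≤ μn⁻¹ (1+√δ)²/(4√δ)`. -/
theorem kantorovich_application (A : Finset ℝ) (μn : ℕ) (n δ : ℝ)
    (hcard : A.card = μn) (hμpos : 0 < μn)
    (hδ0 : 0 < δ) (hδ1 : δ ≤ 1) (hn : 0 < n)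
    (hA : ∀ a ∈ A, δ * n ≤ a ∧ a ≤ n) :
    (∑ a ∈ A, a⁻¹) / (∑ a ∈ A, (Real.sqrt a)⁻¹) ^ 2 ≤
      (μn : ℝ)⁻¹ * ((1 + Real.sqrt δ) ^ 2 / (4 * Real.sqrt δ)) := by
  have hδn : 0 < δ * n := mul_pos hδ0 hn
  set m : ℝ := (Real.sqrt n)⁻¹ with hm
  set M : ℝ := (Real.sqrt (δ * n))⁻¹ with hM
  have hsn : 0 < Real.sqrt n := Real.sqrt_pos.2 hn
  have hsδn : 0 < Real.sqrt (δ * n) := Real.sqrt_pos.2 hδn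
  have hsδ : 0 < Real.sqrt δ := Real.sqrt_pos.2 hδ0
  have hmpos : 0 < m := inv_pos.2 hsn
  have hMpos : 0 < M := inv_pos.2 hsδn
  have hμ : (0:ℝ) < (μn : ℝ) := Nat.cast_pos.2 hμpos
  -- pointwise bounds
  have hbd : ∀ a ∈ A, m ≤ (Real.sqrt a)⁻¹ ∧ (Real.sqrt a)⁻¹ ≤ M := by
    intro a ha
    obtain ⟨h1, h2⟩ := hA a ha
    have hap : 0 < a := lt_of_lt_of_le hδn h1
    have hsa : 0 < Real.sqrt a := Real.sqrt_pos.2 hap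
    constructor
    · exact inv_anti₀ hsa (Real.sqrt_le_sqrt h2)
    · exact inv_anti₀ hsδn (Real.sqrt_le_sqrt h1)
  have hkey : ∀ a ∈ A, a⁻¹ ≤ (m + M) * (Real.sqrt a)⁻¹ - m * M := by
    intro a ha
    obtain ⟨h1, h2⟩ := hbd a ha
    have hap : 0 < a := lt_of_lt_of_le hδn (hA a ha).1
    have : a⁻¹ = ((Real.sqrt a)⁻¹) ^ 2 := by
      rw [← Real.sqrt_inv, Real.sq_sqrt (by positivity)]
    rw [this]
    nlinarith [mul_nonneg (sub_nonneg.2 h1) (sub_nonneg.2 h2)]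
  set S : ℝ := ∑ a ∈ A, (Real.sqrt a)⁻¹ with hS
  set Q : ℝ := ∑ a ∈ A, a⁻¹ with hQ
  have hQle : Q ≤ (m + M) * S - m * M * μn := by
    have := Finset.sum_le_sum hkey
    rw [Finset.sum_sub_distrib, ← Finset.mul_sum, Finset.sum_const, hcard] at this
    simpa [mul_comm, mul_assoc, mul_left_comm] using this
  have hSpos : 0 < S := by
    have : (μn : ℝ) * m ≤ S := by
      rw [hS, ← hcard]
      calc (A.card : ℝ) * m = ∑ _a ∈ A, m := by rw [Finset.sum_const, nsmul_eq_mul]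
      _ ≤ ∑ a ∈ A, (Real.sqrt a)⁻¹ := Finset.sum_le_sum fun a ha => (hbd a ha).1
    nlinarith
  -- AM-GM step
  have hAMGM : (m + M) * S - m * M * μn ≤ (m + M) ^ 2 / (4 * m * M) * (S ^ 2 / μn) := by
    rw [div_mul_div_comm]
    rw [le_div_iff₀ (by positivity)]
    nlinarith [sq_nonneg ((m + M) * S - 2 * m * M * μn)]
  have hfinal : Q / S ^ 2 ≤ (μn : ℝ)⁻¹ * ((m + M) ^ 2 / (4 * m * M)) := by
    rw [div_le_iff₀ (by positivity)]
    calc Q ≤ (m + M) ^ 2 / (4 * m * M) * (S ^ 2 / μn) := hQle.trans hAMGM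
    _ = (μn : ℝ)⁻¹ * ((m + M) ^ 2 / (4 * m * M)) * S ^ 2 := by ring
  refine hfinal.trans_eq ?_
  congr 1
  have hsplit : Real.sqrt (δ * n) = Real.sqrt δ * Real.sqrt n :=
    Real.sqrt_mul hδ0.le n
  rw [hm, hM, hsplit]
  have hδn2 : Real.sqrt δ * Real.sqrt n ≠ 0 := by positivity
  field_simp
  ring
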